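/- CQR coverage: let (X_i,Y_i), i=1,...,n+1 be exchangeable, let q_lo, q_hi : X → ℝ be fixed functions (trained quantile estimates at levels α/2 and 1-α/2), define scores E_i = max(q_lo(X_i) - Y_i, Y_i - q_hi(X_i)), and let Q be the ⌈(n+1)(1-α)⌉-th order statistic of E_1,...,E_n (assumed ≤ n). Then P(Y_{n+1} ∈ [q_lo(X_{n+1}) - Q, q_hi(X_{n+1}) + Q]) ≥ 1-α. -/

import Mathlib

open MeasureTheory ProbabilityTheory Real Set

noncomputable def kthSmallest {n : ℕ} (v : Fin n → ℝ) (k : ℕ) : ℝ :=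
  ((List.ofFn v : Multiset ℝ).sort (· ≤ ·)).getD (k-1) 0

lemma cardlt (n k : ℕ) (h : k ≤ n) :
    ((Finset.univ : Finset (Fin n)).filter (fun q => q.val < k)).card = k := by
  rw [show (Finset.univ.filter fun q : Fin n => q.val < k) = (Finset.univ : Finset (Fin k)).map (Fin.castLEEmb h) by
    ext q
    simp only [Finset.mem_filter, Finset.mem_univ, true_and, Finset.mem_map, Fin.castLEEmb_apply]
    constructor
    · intro hq; exact ⟨⟨q, hq⟩, rfl⟩
    · rintro ⟨i, rfl⟩; exact i.isLt]
  simp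

lemma countP_ofFn {n : ℕ} (f : Fin n → ℝ) (p : ℝ → Prop) [DecidablePred p] :
    (List.ofFn f).countP (fun x => decide (p x)) = (Finset.univ.filter fun i => p (f i)).card := by
  rw [List.ofFn_eq_map, List.countP_map]
  show ((List.finRange n).countP fun i => decide (p (f i))) = _
  rw [Fin.univ_def]
  simp [Finset.card, Finset.filter, Multiset.countP_eq_card_filter, List.countP_eq_length_filter]

-- bridge: counts over v equal counts over positions of the sorted list
lemma card_filter_eq_positions {n : ℕ} (v : Fin n → ℝ) (p : ℝ → Prop) [DecidablePred p] :
    (Finset.univ.filter fun i => p (v i)).card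
      = (Finset.univ.filter fun q : Fin ((List.ofFn v : Multiset ℝ).sort (· ≤ ·)).length
          => p (((List.ofFn v : Multiset ℝ).sort (· ≤ ·)).get q)).card := by
  set l := ((List.ofFn v : Multiset ℝ).sort (· ≤ ·)) with hl
  have hperm : l.Perm (List.ofFn v) := Multiset.coe_eq_coe.mp (Multiset.sort_eq _ _)
  have h1 : l.countP (fun x => decide (p x)) = (List.ofFn v).countP (fun x => decide (p x)) :=
    hperm.countP_eq _
  have h2 : l.countP (fun x => decide (p x)) = (List.ofFn l.get).countP (fun x => decide (p x)) := by
    rw [List.ofFn_get]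
  rw [← countP_ofFn v p, ← h1, h2, countP_ofFn]

lemma length_sorted {n : ℕ} (v : Fin n → ℝ) :
    ((List.ofFn v : Multiset ℝ).sort (· ≤ ·)).length = n := by
  rw [Multiset.length_sort]; simp

lemma kthSmallest_eq_get {n : ℕ} (v : Fin n → ℝ) (k : ℕ) (hk1 : 1 ≤ k) (hkn : k ≤ n) :
    kthSmallest v k = ((List.ofFn v : Multiset ℝ).sort (· ≤ ·)).get
      ⟨k-1, by rw [length_sorted]; omega⟩ := by
  rw [kthSmallest]
  exact List.getD_eq_get (l := ((List.ofFn v : Multiset ℝ).sort (· ≤ ·))) (d := 0) (i := ⟨k-1, by rw [length_sorted]; omega⟩)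

/-- If fewer than `k` of the `v i` are `< c`, then `c ≤ kthSmallest v k`. -/
lemma le_kthSmallest_of_count_lt {n k : ℕ} (v : Fin n → ℝ) (hk1 : 1 ≤ k) (hkn : k ≤ n) (c : ℝ)
    (h : (Finset.univ.filter fun i => v i < c).card < k) : c ≤ kthSmallest v k := by
  by_contra hc
  push_neg at hc
  rw [card_filter_eq_positions v (fun x => x < c)] at h
  set l := ((List.ofFn v : Multiset ℝ).sort (· ≤ ·)) with hl
  have hlen : l.length = n := length_sorted v
  have hkl : k - 1 < l.length := by omega
  rw [kthSmallest_eq_get v k hk1 hkn] at hc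
  have hsub : (Finset.univ.filter fun q : Fin l.length => q.val < k)
      ⊆ (Finset.univ.filter fun q : Fin l.length => l.get q < c) := by
    intro q hq
    simp only [Finset.mem_filter, Finset.mem_univ, true_and] at hq ⊢
    have hle : l.get q ≤ l.get ⟨k-1, hkl⟩ := by
      apply (Multiset.pairwise_sort _ _).rel_get_of_le
      show q.val ≤ k - 1
      omega
    exact lt_of_le_of_lt hle hc
  have hcard : k ≤ (Finset.univ.filter fun q : Fin l.length => l.get q < c).card := by
    have := Finset.card_le_card hsub
    rwa [cardlt l.length k (by omega)] at this
  omega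

/-- At least `k` of the `w j` are `≤ kthSmallest w k`. -/
lemma count_le_kthSmallest {m k : ℕ} (w : Fin m → ℝ) (hk1 : 1 ≤ k) (hkm : k ≤ m) :
    k ≤ (Finset.univ.filter fun j => w j ≤ kthSmallest w k).card := by
  set l := ((List.ofFn w : Multiset ℝ).sort (· ≤ ·)) with hl
  have hlen : l.length = m := length_sorted w
  have hkl : k - 1 < l.length := by omega
  rw [kthSmallest_eq_get w k hk1 hkm]
  have hsub : (Finset.univ.filter fun q : Fin l.length => q.val < k)
      ⊆ (Finset.univ.filter fun q : Fin l.length => l.get q ≤ l.get ⟨k-1, hkl⟩) := by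
    intro q hq
    simp only [Finset.mem_filter, Finset.mem_univ, true_and] at hq ⊢
    apply (Multiset.pairwise_sort _ _).rel_get_of_le
    show q.val ≤ k - 1
    omega
  have := Finset.card_le_card hsub
  rw [cardlt l.length k (by omega)] at this
  rw [card_filter_eq_positions w (fun x => x ≤ l.get ⟨k-1, hkl⟩)]
  exact this

/-- Fewer than `k` of the `w i` are `< kthSmallest w k`. -/
lemma count_lt_kthSmallest {m k : ℕ} (w : Fin m → ℝ) (hk1 : 1 ≤ k) (hkm : k ≤ m) :
    (Finset.univ.filter fun i => w i < kthSmallest w k).card ≤ k - 1 := by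
  set l := ((List.ofFn w : Multiset ℝ).sort (· ≤ ·)) with hl
  have hlen : l.length = m := length_sorted w
  have hkl : k - 1 < l.length := by omega
  rw [kthSmallest_eq_get w k hk1 hkm]
  have hsub : (Finset.univ.filter fun q : Fin l.length => l.get q < l.get ⟨k-1, hkl⟩)
      ⊆ (Finset.univ.filter fun q : Fin l.length => q.val < k - 1) := by
    intro q hq
    simp only [Finset.mem_filter, Finset.mem_univ, true_and] at hq ⊢
    by_contra hq'
    push_neg at hq'
    have : l.get ⟨k-1, hkl⟩ ≤ l.get q := by
      apply (Multiset.pairwise_sort _ _).rel_get_of_le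
      exact hq'
    exact absurd hq (not_lt.mpr this)
  have := Finset.card_le_card hsub
  rw [cardlt l.length (k-1) (by omega)] at this
  rw [card_filter_eq_positions w (fun x => x < l.get ⟨k-1, hkl⟩)]
  exact this

/-- Deterministic key lemma: at least `k` indices have strict rank `≤ k-1`. -/
lemma card_small_rank {m k : ℕ} (w : Fin m → ℝ) (hk1 : 1 ≤ k) (hkm : k ≤ m) :
    k ≤ (Finset.univ.filter fun j =>
      (Finset.univ.filter fun i => w i < w j).card ≤ k - 1).card := by
  have hsub : (Finset.univ.filter fun j => w j ≤ kthSmallest w k)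
      ⊆ (Finset.univ.filter fun j => (Finset.univ.filter fun i => w i < w j).card ≤ k - 1) := by
    intro j hj
    simp only [Finset.mem_filter, Finset.mem_univ, true_and] at hj ⊢
    have hsub2 : (Finset.univ.filter fun i => w i < w j)
        ⊆ (Finset.univ.filter fun i => w i < kthSmallest w k) := by
      intro i hi
      simp only [Finset.mem_filter, Finset.mem_univ, true_and] at hi ⊢
      exact lt_of_lt_of_le hi hj
    exact le_trans (Finset.card_le_card hsub2) (count_lt_kthSmallest w hk1 hkm)
  exact le_trans (count_le_kthSmallest w hk1 hkm) (Finset.card_le_card hsub)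

lemma card_filter_perm {m : ℕ} (σ : Equiv.Perm (Fin m)) (p : Fin m → Prop) [DecidablePred p] :
    (Finset.univ.filter fun i => p (σ i)).card = (Finset.univ.filter p).card := by
  apply Finset.card_bij' (fun i _ => σ i) (fun i _ => σ.symm i)
  · intro a ha; simp only [Finset.mem_filter, Finset.mem_univ, true_and] at ha ⊢; exact ha
  · intro a ha; simp only [Finset.mem_filter, Finset.mem_univ, true_and] at ha ⊢; simpa using ha
  · intro a _; simp
  · intro a _; simp

open MeasureTheory ProbabilityTheory Real Set
open scoped ENNReal NNReal

/-- Coverage of conformalized quantile regression (CQR). -/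
theorem stmt_13 {Ω 𝒳 : Type*} [MeasurableSpace Ω] [MeasurableSpace 𝒳]
    (P : Measure Ω) [IsProbabilityMeasure P]
    (n : ℕ) (V : Fin (n+1) → Ω → 𝒳 × ℝ) (hmeas : ∀ i, Measurable (V i))
    (hexch : ∀ σ : Equiv.Perm (Fin (n+1)),
      Measure.map (fun ω i => V (σ i) ω) P = Measure.map (fun ω i => V i ω) P)
    (qlo qhi : 𝒳 → ℝ) (hlo : Measurable qlo) (hhi : Measurable qhi)
    (E : Fin (n+1) → Ω → ℝ)
    (hE : ∀ i ω, E i ω = max (qlo (V i ω).1 - (V i ω).2) ((V i ω).2 - qhi (V i ω).1))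
    (α : ℝ) (hα : α ∈ Set.Ioo (0:ℝ) 1)
    (k : ℕ) (hk : (k : ℤ) = ⌈((n:ℝ)+1)*(1-α)⌉) (hkn : k ≤ n)
    (Q : Ω → ℝ) (hQ : ∀ ω, Q ω = kthSmallest (fun i : Fin n => E i.castSucc ω) k) :
    P {ω | (V (Fin.last n) ω).2 ∈
        Set.Icc (qlo (V (Fin.last n) ω).1 - Q ω) (qhi (V (Fin.last n) ω).1 + Q ω)} ≥
      ENNReal.ofReal (1-α) := by
  classical
  obtain ⟨hα0, hα1⟩ := hα
  have hk1 : 1 ≤ k := by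
    have h0 : (0:ℝ) < ((n:ℝ)+1)*(1-α) := by
      apply mul_pos (by positivity) (by linarith)
    have h1 : (1:ℤ) ≤ ⌈((n:ℝ)+1)*(1-α)⌉ := Int.ceil_pos.mpr h0
    rw [← hk] at h1
    exact_mod_cast h1
  set e : 𝒳 × ℝ → ℝ := fun p => max (qlo p.1 - p.2) (p.2 - qhi p.1) with he
  have hemeas : Measurable e :=
    ((hlo.comp measurable_fst).sub measurable_snd).max
      (measurable_snd.sub (hhi.comp measurable_fst))
  set Φ : Ω → (Fin (n+1) → 𝒳 × ℝ) := fun ω i => V i ω with hΦ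
  have hΦmeas : Measurable Φ := measurable_pi_lambda _ hmeas
  set μ := Measure.map Φ P with hμ
  have hμprob : IsProbabilityMeasure μ := Measure.isProbabilityMeasure_map hΦmeas.aemeasurable
  set A : Fin (n+1) → Set (Fin (n+1) → 𝒳 × ℝ) := fun j =>
    {w | (Finset.univ.filter fun i => e (w i) < e (w j)).card ≤ k - 1} with hA
  have hrank_meas : ∀ j, Measurable fun w : Fin (n+1) → 𝒳 × ℝ =>
      (Finset.univ.filter fun i => e (w i) < e (w j)).card := by
    intro j
    simp only [Finset.card_filter]
    apply Finset.measurable_sum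
    intro i _
    have hset : MeasurableSet {w : Fin (n+1) → 𝒳 × ℝ | e (w i) < e (w j)} :=
      measurableSet_lt (hemeas.comp (measurable_pi_apply i))
        (hemeas.comp (measurable_pi_apply j))
    exact Measurable.ite hset measurable_const measurable_const
  have hAmeas : ∀ j, MeasurableSet (A j) := by
    intro j
    exact hrank_meas j (measurableSet_Iic (a := k - 1))
  -- exchangeability: all A j have equal measure
  have hswap : ∀ j, μ (A j) = μ (A (Fin.last n)) := by
    intro j
    set σ := Equiv.swap j (Fin.last n) with hσ
    set T : (Fin (n+1) → 𝒳 × ℝ) → (Fin (n+1) → 𝒳 × ℝ) := fun w i => w (σ i) with hT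
    have hTmeas : Measurable T := measurable_pi_lambda _ fun i => measurable_pi_apply (σ i)
    have hmapT : Measure.map T μ = μ := by
      rw [hμ, Measure.map_map hTmeas hΦmeas]
      have : T ∘ Φ = fun ω i => V (σ i) ω := rfl
      rw [this, hexch σ]
    have hpre : T ⁻¹' (A j) = A (σ j) := by
      ext w
      simp only [hA, Set.mem_preimage, Set.mem_setOf_eq, hT]
      rw [card_filter_perm σ (fun i => e (w i) < e (w (σ j)))]
    have : μ (A j) = μ (T ⁻¹' (A j)) := by
      conv_lhs => rw [← hmapT]
      rw [Measure.map_apply hTmeas (hAmeas j)]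
    rw [this, hpre, hσ, Equiv.swap_apply_left]
  -- pointwise count bound
  have hpoint : ∀ w, (k : ℝ≥0∞) ≤ ∑ j, (A j).indicator 1 w := by
    intro w
    have h1 : ∑ j, (A j).indicator (1 : (Fin (n+1) → 𝒳 × ℝ) → ℝ≥0∞) w
        = ((Finset.univ.filter fun j => w ∈ A j).card : ℝ≥0∞) := by
      rw [Finset.card_filter]
      push_cast
      apply Finset.sum_congr rfl
      intro j _
      simp [Set.indicator_apply]
    rw [h1]
    have h2 := card_small_rank (fun i => e (w i)) hk1 (by omega : k ≤ n+1)
    have h3 : (Finset.univ.filter fun j =>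
        (Finset.univ.filter fun i => e (w i) < e (w j)).card ≤ k - 1)
        = (Finset.univ.filter fun j => w ∈ A j) := by
      apply Finset.filter_congr
      intro j _
      simp [hA]
    rw [h3] at h2
    exact_mod_cast h2
  -- sum of measures
  have hsum : (k : ℝ≥0∞) ≤ ((n:ℝ≥0∞)+1) * μ (A (Fin.last n)) := by
    have hint : ∀ j, μ (A j) = ∫⁻ w, (A j).indicator 1 w ∂μ := by
      intro j
      rw [lintegral_indicator_one (hAmeas j)]
    calc (k : ℝ≥0∞) = ∫⁻ _, (k : ℝ≥0∞) ∂μ := by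
          rw [lintegral_const, measure_univ, mul_one]
      _ ≤ ∫⁻ w, ∑ j, (A j).indicator 1 w ∂μ := lintegral_mono hpoint
      _ = ∑ j, ∫⁻ w, (A j).indicator 1 w ∂μ := by
          apply lintegral_finset_sum
          intro j _
          exact Measurable.indicator measurable_const (hAmeas j)
      _ = ∑ j : Fin (n+1), μ (A (Fin.last n)) := by
          apply Finset.sum_congr rfl
          intro j _
          rw [← hint j, hswap j]
      _ = ((n:ℝ≥0∞)+1) * μ (A (Fin.last n)) := by
          rw [Finset.sum_const, Finset.card_univ, Fintype.card_fin, nsmul_eq_mul]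
          push_cast
          ring
  have hmain : ENNReal.ofReal (1-α) ≤ μ (A (Fin.last n)) := by
    have hdiv : (k : ℝ≥0∞) / ((n:ℝ≥0∞)+1) ≤ μ (A (Fin.last n)) := by
      rw [ENNReal.div_le_iff_le_mul (Or.inl (by simp)) (Or.inl (by simp))]
      rw [mul_comm] at hsum
      exact hsum
    refine le_trans ?_ hdiv
    have hr : (1-α) ≤ (k:ℝ)/((n:ℝ)+1) := by
      rw [le_div_iff₀ (by positivity)]
      have hceil : ((n:ℝ)+1)*(1-α) ≤ (k:ℝ) := by
        have := Int.le_ceil (((n:ℝ)+1)*(1-α))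
        rw [← hk] at this
        exact_mod_cast this
      linarith
    calc ENNReal.ofReal (1-α) ≤ ENNReal.ofReal ((k:ℝ)/((n:ℝ)+1)) :=
          ENNReal.ofReal_le_ofReal hr
      _ = (k : ℝ≥0∞) / ((n:ℝ≥0∞)+1) := by
          rw [ENNReal.ofReal_div_of_pos (by positivity)]
          congr 1
          · exact ENNReal.ofReal_natCast k
          · push_cast
            rw [ENNReal.ofReal_add (by positivity) (by norm_num)]
            simp [ENNReal.ofReal_natCast]
  -- relate A (last n) to the target set
  set B : Set (Fin (n+1) → 𝒳 × ℝ) := {w | e (w (Fin.last n)) ≤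
    kthSmallest (fun i : Fin n => e (w i.castSucc)) k} with hB
  have hAB : A (Fin.last n) ⊆ B := by
    intro w hw
    simp only [hA, Set.mem_setOf_eq] at hw
    simp only [hB, Set.mem_setOf_eq]
    apply le_kthSmallest_of_count_lt _ hk1 hkn
    have hcs : (Finset.univ.filter fun i : Fin n =>
        e (w i.castSucc) < e (w (Fin.last n))).card
        ≤ (Finset.univ.filter fun i : Fin (n+1) =>
        e (w i) < e (w (Fin.last n))).card := by
      apply Finset.card_le_card_of_injOn (fun i => i.castSucc)
      · intro i hi
        simp only [Finset.coe_filter, Finset.mem_filter, Finset.mem_univ, true_and, Set.mem_setOf_eq] at hi ⊢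
        exact hi
      · intro a _ b _ hab
        exact Fin.castSucc_injective n hab
    omega
  have htarget : {ω | (V (Fin.last n) ω).2 ∈
      Set.Icc (qlo (V (Fin.last n) ω).1 - Q ω) (qhi (V (Fin.last n) ω).1 + Q ω)}
      = Φ ⁻¹' B := by
    ext ω
    simp only [Set.mem_setOf_eq, Set.mem_Icc, Set.mem_preimage, hB, hΦ]
    have hQω : kthSmallest (fun i : Fin n => e (V i.castSucc ω)) k = Q ω := by
      rw [hQ ω]
      congr 1
      funext i
      rw [hE i.castSucc ω]
    rw [hQω]
    constructor
    · rintro ⟨h1, h2⟩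
      exact max_le (by linarith) (by linarith)
    · intro h
      rw [max_le_iff] at h
      constructor <;> linarith [h.1, h.2]
  rw [htarget]
  have hfinal : P (Φ ⁻¹' (A (Fin.last n))) = μ (A (Fin.last n)) := by
    rw [hμ, Measure.map_apply hΦmeas (hAmeas _)]
  calc ENNReal.ofReal (1-α) ≤ μ (A (Fin.last n)) := hmain
    _ = P (Φ ⁻¹' (A (Fin.last n))) := hfinal.symm
    _ ≤ P (Φ ⁻¹' B) := measure_mono (Set.preimage_mono hAB)
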